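/- For a unit interval order U on {1,...,n} with part listing w = q(U) produced by the insertion algorithm, the poset P(w) is isomorphic to U, via the bijection f that numbers the positions of w by increasing letter value and, within equal letter values, from left to right. -/

import Mathlib

/-- A unit interval order on `Fin n`: `x ≺ y` implies `x < y`, and
`x ≺ y` implies `x' ≺ y'` for all `x' ≤ x` and `y' ≥ y`. -/
def IsUIO {n : ℕ} (r : Fin n → Fin n → Prop) : Prop :=
  (∀ x y, r x y → x < y) ∧
  (∀ x y, r x y → ∀ x' y', x' ≤ x → y ≤ y' → r x' y')

/-- The poset `P(w)` of a part listing `w`: `i ≺ j` iff `w j − w i ≥ 2`,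
or `w j − w i = 1` and `i < j`. -/
def Prel {n : ℕ} (w : Fin n → ℕ) (i j : Fin n) : Prop :=
  w i + 2 ≤ w j ∨ (w j = w i + 1 ∧ i < j)

/-- The level function: `ℓ j = 0` if `j` is minimal, else `1 + max {ℓ i : i ≺ j}`
(for a unit interval order, `i ≺ j` implies `i < j`). -/
def level {n : ℕ} (r : Fin n → Fin n → Prop) [DecidableRel r] : Fin n → ℕ
  | j =>
    ((Finset.univ.filter (fun i => r i j ∧ i < j)).attach).sup
      (fun i => level r i.1 + 1)
termination_by j => j.val
decreasing_by
  exact (Finset.mem_filter.mp i.2).2.2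

/-- `C i`: the number of elements of level `ℓ(i) − 1` comparable to `i`. -/
def comparCount {n : ℕ} (r : Fin n → Fin n → Prop) [DecidableRel r] (i : Fin n) : ℕ :=
  (Finset.univ.filter (fun j => level r j + 1 = level r i ∧ (r j i ∨ r i j))).card

/-- Position directly after the `k`-th occurrence of `v` in a list (`0` if `k = 0`). -/
def afterKth : List ℕ → ℕ → ℕ → ℕ
  | _, _, 0 => 0
  | [], _, _ + 1 => 0
  | x :: xs, v, k + 1 =>
    if x = v then
      if k = 0 then 1 else 1 + afterKth xs v k
    else 1 + afterKth xs v (k + 1)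

/-- Starting from position `p`, skip the occurrences of the letter `l`. -/
def skipRun (q : List ℕ) (l p : ℕ) : ℕ :=
  p + ((q.drop p).takeWhile (fun x => x = l)).length

/-- The insertion algorithm: insert `ℓ(i)` directly after the occurrences of `ℓ(i)`
immediately following the `C_i`-th letter `ℓ(i) − 1`. -/
def buildQ {n : ℕ} (r : Fin n → Fin n → Prop) [DecidableRel r] : ℕ → List ℕ
  | 0 => []
  | i + 1 =>
    let q := buildQ r i
    if h : i < n then
      let l := level r ⟨i, h⟩
      q.insertIdx (skipRun q l (afterKth q (l - 1) (comparCount r ⟨i, h⟩))) l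
    else q

/-- The part listing `q(U)` produced by the insertion algorithm. -/
def qList {n : ℕ} (r : Fin n → Fin n → Prop) [DecidableRel r] : List ℕ :=
  buildQ r n

namespace UIO

variable {n : ℕ} {r : Fin n → Fin n → Prop} [DecidableRel r]

lemma level_eq (j : Fin n) : level r j =
    ((Finset.univ.filter (fun i => r i j ∧ i < j)).attach).sup
      (fun i => level r i.1 + 1) := by rw [level]

lemma level_lt_of_rel (h : IsUIO r) {i j : Fin n} (hij : r i j) :
    level r i < level r j := by
  have hmem : i ∈ Finset.univ.filter (fun i => r i j ∧ i < j) := by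
    simp only [Finset.mem_filter, Finset.mem_univ, true_and]
    exact ⟨hij, h.1 i j hij⟩
  have : level r i + 1 ≤ level r j := by
    rw [level_eq j]
    exact Finset.le_sup (f := fun i => level r i.1 + 1) (Finset.mem_attach _ ⟨i, hmem⟩)
  omega

lemma level_mono (h : IsUIO r) {x y : Fin n} (hxy : x ≤ y) :
    level r x ≤ level r y := by
  rw [level_eq x, level_eq y]
  apply Finset.sup_le
  rintro ⟨i, hi⟩ -
  rcases Finset.mem_filter.mp hi with ⟨-, hix, hlt⟩
  have hiy : r i y := h.2 i x hix i y le_rfl hxy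
  have hmem : i ∈ Finset.univ.filter (fun i' => r i' y ∧ i' < y) :=
    Finset.mem_filter.mpr ⟨Finset.mem_univ i, hiy, lt_of_lt_of_le hlt hxy⟩
  exact Finset.le_sup (f := fun i => level r i.1 + 1) (Finset.mem_attach _ ⟨i, hmem⟩)

lemma exists_pred_of_level_succ {j : Fin n} {c : ℕ} (hl : level r j = c + 1) :
    ∃ i, r i j ∧ i < j ∧ level r i = c := by
  classical
  set s := (Finset.univ.filter (fun i => r i j ∧ i < j)).attach with hs
  have hsup : s.sup (fun i => level r i.1 + 1) = c + 1 := by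
    rw [← level_eq j]; exact hl
  have hne : s.Nonempty := by
    by_contra hemp
    rw [Finset.not_nonempty_iff_eq_empty] at hemp
    rw [hemp] at hsup
    simp at hsup
  obtain ⟨i, -, hi⟩ := Finset.exists_mem_eq_sup s hne (fun i => level r i.1 + 1)
  rw [hsup] at hi
  rcases Finset.mem_filter.mp i.2 with ⟨-, hrij, hlt⟩
  exact ⟨i.1, hrij, hlt, by omega⟩

lemma rel_of_level_ge (h : IsUIO r) {x y : Fin n}
    (hxy : level r x + 2 ≤ level r y) : r x y := by
  obtain ⟨c, hc⟩ : ∃ c, level r y = c + 1 := ⟨level r y - 1, by omega⟩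
  obtain ⟨i, hriy, -, hlvl⟩ := exists_pred_of_level_succ hc
  have hxi : x ≤ i := by
    by_contra hxi
    push_neg at hxi
    have := level_mono h (le_of_lt hxi)
    omega
  exact h.2 i y hriy x y hxi le_rfl

end UIO

/-- the number of elements of level `< c` -/
def Nlt {m : ℕ} (s : Fin m → Fin m → Prop) [DecidableRel s] (c : ℕ) : ℕ :=
  (Finset.univ.filter fun x : Fin m => level s x < c).card

namespace UIO
variable {n : ℕ} {r : Fin n → Fin n → Prop} [DecidableRel r]

lemma card_filter_val_lt (m : ℕ) (hm : m ≤ n) :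
    (Finset.univ.filter fun q : Fin n => q.val < m).card = m := by
  rcases Nat.lt_or_ge m n with hm' | hm'
  · have : (Finset.univ.filter fun q : Fin n => q.val < m) = Finset.Iio ⟨m, hm'⟩ := by
      ext x; simp [Finset.mem_Iio, Fin.lt_def]
    rw [this, Fin.card_Iio]
  · have hmn : m = n := le_antisymm hm hm'
    subst hmn
    have : (Finset.univ.filter fun q : Fin m => q.val < m) = Finset.univ := by
      apply Finset.filter_true_of_mem; intro x _; exact x.isLt
    simp [this]

lemma lt_Nlt_iff (h : IsUIO r) (x : Fin n) (c : ℕ) :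
    x.val < Nlt r c ↔ level r x < c := by
  constructor
  · intro hx
    by_contra hc
    push_neg at hc
    have hsub : (Finset.univ.filter fun y : Fin n => level r y < c) ⊆
        Finset.univ.filter fun y : Fin n => y.val < x.val := by
      intro y hy
      rcases Finset.mem_filter.mp hy with ⟨-, hy'⟩
      have : y < x := by
        by_contra hyx
        push_neg at hyx
        have := level_mono h hyx
        omega
      simp only [Finset.mem_filter, Finset.mem_univ, true_and]
      exact Fin.lt_def.mp this
    have := Finset.card_le_card hsub
    rw [card_filter_val_lt x.val (le_of_lt x.isLt)] at this
    unfold Nlt at hx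
    omega
  · intro hx
    have hsub : (Finset.univ.filter fun y : Fin n => y.val < x.val + 1) ⊆
        Finset.univ.filter fun y : Fin n => level r y < c := by
      intro y hy
      rcases Finset.mem_filter.mp hy with ⟨-, hy'⟩
      have hyx : y ≤ x := by omega
      have := level_mono h hyx
      simp; omega
    have := Finset.card_le_card hsub
    rw [card_filter_val_lt (x.val + 1) x.isLt] at this
    unfold Nlt
    omega

lemma Nlt_mono {c c' : ℕ} (hc : c ≤ c') : Nlt r c ≤ Nlt r c' := by
  apply Finset.card_le_card
  intro y hy
  rcases Finset.mem_filter.mp hy with ⟨-, hy'⟩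
  simp; omega

lemma Nlt_le (c : ℕ) : Nlt r c ≤ n := by
  calc Nlt r c ≤ Finset.univ.card := Finset.card_filter_le _ _
  _ = n := by simp

lemma card_filter_level_eq (c : ℕ) :
    (Finset.univ.filter fun x : Fin n => level r x = c).card = Nlt r (c + 1) - Nlt r c := by
  have hsplit : (Finset.univ.filter fun x : Fin n => level r x < c + 1) =
      (Finset.univ.filter fun x : Fin n => level r x < c) ∪
      (Finset.univ.filter fun x : Fin n => level r x = c) := by
    rw [← Finset.filter_or]
    apply Finset.filter_congr
    intro x _; constructor <;> intro hx <;> omega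
  have hdisj : Disjoint (Finset.univ.filter fun x : Fin n => level r x < c)
      (Finset.univ.filter fun x : Fin n => level r x = c) := by
    rw [Finset.disjoint_filter]
    intro x _ hx; omega
  have := Finset.card_union_of_disjoint hdisj
  rw [← hsplit] at this
  unfold Nlt
  omega

lemma Nlt_succ (c : ℕ) :
    Nlt r (c + 1) = Nlt r c + (Finset.univ.filter fun x : Fin n => level r x = c).card := by
  have h1 := card_filter_level_eq (r := r) c
  have h2 := Nlt_mono (r := r) (n := n) (c := c) (c' := c + 1) (by omega)
  omega

lemma level_eq_iff (h : IsUIO r) (x : Fin n) (c : ℕ) :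
    level r x = c ↔ Nlt r c ≤ x.val ∧ x.val < Nlt r (c + 1) := by
  have h1 := lt_Nlt_iff h x (c+1)
  have h2 := lt_Nlt_iff h x c
  omega

lemma Nlt_add_card_eq (h : IsUIO r) (M : Fin n) :
    Nlt r (level r M) +
      (Finset.univ.filter fun x : Fin n => x.val < M.val ∧ level r x = level r M).card
      = M.val := by
  have hsplit : (Finset.univ.filter fun x : Fin n => x.val < M.val) =
      (Finset.univ.filter fun x : Fin n => level r x < level r M) ∪
      (Finset.univ.filter fun x : Fin n => x.val < M.val ∧ level r x = level r M) := by
    rw [← Finset.filter_or]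
    apply Finset.filter_congr
    intro x _
    simp only [iff_def]
    constructor
    · intro hx
      have hle : x ≤ M := by rw [Fin.le_def]; omega
      have := level_mono h hle
      rcases Nat.lt_or_ge (level r x) (level r M) with h' | h'
      · exact Or.inl h'
      · exact Or.inr ⟨hx, by omega⟩
    · rintro (hx | ⟨hx, -⟩)
      · by_contra hxm
        push_neg at hxm
        have : M ≤ x := by rw [Fin.le_def]; omega
        have := level_mono h this
        omega
      · exact hx
  have hdisj : Disjoint (Finset.univ.filter fun x : Fin n => level r x < level r M)
      (Finset.univ.filter fun x : Fin n => x.val < M.val ∧ level r x = level r M) := by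
    rw [Finset.disjoint_filter]
    intro x _ hx; omega
  have hcard := Finset.card_union_of_disjoint hdisj
  rw [← hsplit, card_filter_val_lt M.val (le_of_lt M.isLt)] at hcard
  unfold Nlt
  omega

lemma comparCount_eq_pred (h : IsUIO r) (y : Fin n) :
    comparCount r y =
    (Finset.univ.filter fun j : Fin n => level r j + 1 = level r y ∧ r j y).card := by
  unfold comparCount
  congr 1
  apply Finset.filter_congr
  intro j _
  constructor
  · rintro ⟨hlvl, hj | hj⟩
    · exact ⟨hlvl, hj⟩
    · have := level_lt_of_rel h hj
      omega
  · rintro ⟨hlvl, hj⟩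
    exact ⟨hlvl, Or.inl hj⟩

lemma comparCount_eq_zero (h : IsUIO r) (y : Fin n) (hy : level r y = 0) :
    comparCount r y = 0 := by
  rw [comparCount_eq_pred h, Finset.card_eq_zero, Finset.filter_eq_empty_iff]
  intro j _
  rw [hy]
  rintro ⟨hj, -⟩
  omega

lemma comparCount_mono (h : IsUIO r) {y y' : Fin n}
    (hlvl : level r y = level r y') (hle : y ≤ y') :
    comparCount r y ≤ comparCount r y' := by
  rw [comparCount_eq_pred h, comparCount_eq_pred h]
  apply Finset.card_le_card
  intro j hj
  rcases Finset.mem_filter.mp hj with ⟨-, h1, h2⟩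
  have h3 : r j y' := h.2 j y h2 j y' le_rfl hle
  simp only [Finset.mem_filter, Finset.mem_univ, true_and]
  exact ⟨by omega, h3⟩

lemma comparCount_pos (h : IsUIO r) {y : Fin n} {c : ℕ} (hy : level r y = c + 1) :
    1 ≤ comparCount r y := by
  obtain ⟨i, hriy, -, hlvl⟩ := exists_pred_of_level_succ hy
  rw [comparCount_eq_pred h]
  rw [Nat.one_le_iff_ne_zero, ← Nat.pos_iff_ne_zero, Finset.card_pos]
  refine ⟨i, ?_⟩
  simp only [Finset.mem_filter, Finset.mem_univ, true_and]
  exact ⟨by omega, hriy⟩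

lemma comparCount_le (h : IsUIO r) {y : Fin n} {c : ℕ} (hy : level r y = c + 1) :
    comparCount r y ≤
      (Finset.univ.filter fun x : Fin n => x.val < y.val ∧ level r x = c).card := by
  rw [comparCount_eq_pred h]
  apply Finset.card_le_card
  intro j hj
  rcases Finset.mem_filter.mp hj with ⟨-, h1, h2⟩
  have h3 := h.1 j y h2
  simp only [Finset.mem_filter, Finset.mem_univ, true_and]
  exact ⟨Fin.lt_def.mp h3, by omega⟩

lemma rel_iff_lt_add (h : IsUIO r) {x y : Fin n} {c : ℕ}
    (hx : level r x = c) (hy : level r y = c + 1) :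
    r x y ↔ x.val < Nlt r c + comparCount r y := by
  have hxlo : Nlt r c ≤ x.val := by
    have := (lt_Nlt_iff h x c).2
    by_contra hc
    push_neg at hc
    have := (lt_Nlt_iff h x c).1 hc
    omega
  constructor
  · intro hrxy
    -- T = elements of level c up to x
    have hT : (Finset.univ.filter fun j : Fin n => level r j = c ∧ j ≤ x) =
        Finset.Icc ⟨Nlt r c, lt_of_le_of_lt hxlo x.isLt⟩ x := by
      ext j
      simp only [Finset.mem_filter, Finset.mem_univ, true_and, Finset.mem_Icc,
        Fin.le_def]
      constructor
      · rintro ⟨h1, h2⟩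
        refine ⟨?_, h2⟩
        show Nlt r c ≤ (j : ℕ)
        have := (level_eq_iff h j c).1 h1
        omega
      · rintro ⟨h1, h2⟩
        have h1 : Nlt r c ≤ (j : ℕ) := h1
        have hjx : (j:ℕ) ≤ (x:ℕ) := h2
        have : level r j ≤ level r x := level_mono h (by rwa [Fin.le_def])
        have hge : ¬ (j.val < Nlt r c) := by omega
        rw [lt_Nlt_iff h j c] at hge
        constructor
        · omega
        · exact h2
    have hTS : (Finset.univ.filter fun j : Fin n => level r j = c ∧ j ≤ x) ⊆
        Finset.univ.filter fun j : Fin n => level r j + 1 = level r y ∧ r j y := by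
      intro j hj
      rcases Finset.mem_filter.mp hj with ⟨-, h1, h2⟩
      have h3 : r j y := h.2 x y hrxy j y h2 le_rfl
      simp only [Finset.mem_filter, Finset.mem_univ, true_and]
      exact ⟨by omega, h3⟩
    have := Finset.card_le_card hTS
    rw [hT, Fin.card_Icc, ← comparCount_eq_pred h] at this
    simp only at this
    omega
  · intro hlt
    by_contra hrxy
    have hS : (Finset.univ.filter fun j : Fin n => level r j + 1 = level r y ∧ r j y) ⊆
        Finset.univ.filter fun j : Fin n => level r j = c ∧ j < x := by
      intro j hj
      rcases Finset.mem_filter.mp hj with ⟨-, h1, h2⟩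
      have hjx : j < x := by
        by_contra hc
        push_neg at hc
        exact hrxy (h.2 j y h2 x y hc le_rfl)
      simp only [Finset.mem_filter, Finset.mem_univ, true_and]
      exact ⟨by omega, hjx⟩
    have hT : (Finset.univ.filter fun j : Fin n => level r j = c ∧ j < x) =
        Finset.Ico ⟨Nlt r c, lt_of_le_of_lt hxlo x.isLt⟩ x := by
      ext j
      simp only [Finset.mem_filter, Finset.mem_univ, true_and, Finset.mem_Ico,
        Fin.lt_def, Fin.le_def]
      constructor
      · rintro ⟨h1, h2⟩
        refine ⟨?_, h2⟩
        show Nlt r c ≤ (j : ℕ)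
        have := (level_eq_iff h j c).1 h1
        omega
      · rintro ⟨h1, h2⟩
        have h1 : Nlt r c ≤ (j : ℕ) := h1
        have : level r j ≤ level r x := level_mono h (by rw [Fin.le_def]; omega)
        have hge : ¬ (j.val < Nlt r c) := by omega
        rw [lt_Nlt_iff h j c] at hge
        exact ⟨by omega, h2⟩
    have := Finset.card_le_card hS
    rw [hT, Fin.card_Ico, ← comparCount_eq_pred h] at this
    simp only at this
    omega

end UIO

namespace UIO


lemma insertIdx_eq : ∀ (p : ℕ) (L : List ℕ) (c : ℕ), p ≤ L.length →
    L.insertIdx p c = L.take p ++ c :: L.drop p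
  | 0, L, c, _ => by simp
  | p+1, [], c, h => by simp at h
  | p+1, x::xs, c, h => by
    rw [List.insertIdx_succ_cons]
    rw [insertIdx_eq p xs c (by simpa using h)]
    simp

lemma count_take_mono (L : List ℕ) (c : ℕ) {t t' : ℕ} (h : t ≤ t') :
    (L.take t).count c ≤ (L.take t').count c := by
  have heq : L.take t = (L.take t').take t := by
    rw [List.take_take, Nat.min_eq_left h]
  rw [heq]
  exact ((List.take_prefix t (L.take t')).sublist).count_le c

lemma lt_of_count_take_lt {L : List ℕ} {c t t' : ℕ}
    (h : (L.take t).count c < (L.take t').count c) : t < t' := by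
  by_contra hc
  push_neg at hc
  have := count_take_mono L c hc
  omega

lemma count_take_succ_getD (L : List ℕ) (c t : ℕ) (ht : t < L.length) :
    (L.take (t+1)).count c = (L.take t).count c + if L.getD t 0 = c then 1 else 0 := by
  rw [List.take_succ, List.getElem?_eq_getElem ht]
  simp only [Option.toList_some, List.count_append, List.count_singleton,
    List.getD_eq_getElem L 0 ht, beq_iff_eq]

lemma count_take_lt (L : List ℕ) {c t t' : ℕ} (h : t < t') (ht : t < L.length)
    (hc : L.getD t 0 = c) : (L.take t).count c < (L.take t').count c := by
  have h1 := count_take_succ_getD L c t ht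
  rw [if_pos hc] at h1
  have h2 := count_take_mono L c (show t + 1 ≤ t' by omega)
  omega

lemma count_le_count_take (L : List ℕ) (c t : ℕ) :
    (L.take t).count c ≤ L.count c :=
  ((List.take_prefix t L).sublist).count_le c

lemma afterKth_le_length : ∀ (L : List ℕ) (v k : ℕ), afterKth L v k ≤ L.length
  | _, _, 0 => by simp [afterKth]
  | [], _, k+1 => by simp [afterKth]
  | x :: xs, v, k+1 => by
    simp only [afterKth, List.length_cons]
    split
    · split
      · omega
      · have := afterKth_le_length xs v k
        omega
    · have := afterKth_le_length xs v (k+1)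
      omega

lemma count_take_afterKth : ∀ (L : List ℕ) (v k : ℕ), k ≤ L.count v →
    (L.take (afterKth L v k)).count v = k
  | _, _, 0 => by intro h; simp [afterKth]
  | [], v, k+1 => by intro h; simp at h
  | x :: xs, v, k+1 => by
    intro h
    simp only [afterKth]
    by_cases hx : x = v
    · rw [if_pos hx]
      by_cases hk : k = 0
      · subst hk
        rw [if_pos rfl]
        simp [List.count_cons, hx]
      · rw [if_neg hk]
        have hcnt : k ≤ xs.count v := by
          rw [List.count_cons] at h
          simp [hx] at h
          omega
        obtain ⟨k', rfl⟩ : ∃ k', k = k'+1 := ⟨k-1, by omega⟩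
        have := count_take_afterKth xs v (k'+1) hcnt
        rw [Nat.add_comm 1 (afterKth xs v (k'+1))]
        rw [List.take_succ_cons]
        rw [List.count_cons]
        simp [hx, this]
    · rw [if_neg hx]
      have hcnt : k + 1 ≤ xs.count v := by
        rw [List.count_cons] at h
        simp [hx] at h
        omega
      have := count_take_afterKth xs v (k+1) hcnt
      rw [Nat.add_comm 1 (afterKth xs v (k+1))]
      rw [List.take_succ_cons, List.count_cons]
      simp [hx, this]

lemma afterKth_getD : ∀ (L : List ℕ) (v k : ℕ), 1 ≤ k → k ≤ L.count v →
    ∃ a, afterKth L v k = a + 1 ∧ L.getD a 0 = v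
  | [], v, k, h1, h2 => by simp at h2; omega
  | x :: xs, v, k, h1, h2 => by
    obtain ⟨k', rfl⟩ : ∃ k', k = k'+1 := ⟨k-1, by omega⟩
    simp only [afterKth]
    by_cases hx : x = v
    · rw [if_pos hx]
      by_cases hk : k' = 0
      · exact ⟨0, by rw [if_pos hk], by simpa using hx⟩
      · rw [if_neg hk]
        have hcnt : k' ≤ xs.count v := by
          rw [List.count_cons] at h2
          simp [hx] at h2
          omega
        obtain ⟨a, ha1, ha2⟩ := afterKth_getD xs v k' (by omega) hcnt
        exact ⟨a + 1, by omega, by simpa using ha2⟩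
    · rw [if_neg hx]
      have hcnt : k' + 1 ≤ xs.count v := by
        rw [List.count_cons] at h2
        simp [hx] at h2
        omega
      obtain ⟨a, ha1, ha2⟩ := afterKth_getD xs v (k'+1) (by omega) hcnt
      exact ⟨a + 1, by omega, by simpa using ha2⟩

lemma skipRun_le_length {L : List ℕ} {l a : ℕ} (ha : a ≤ L.length) :
    skipRun L l a ≤ L.length := by
  unfold skipRun
  have h1 := (List.takeWhile_prefix (l := L.drop a) (fun x => x = l)).length_le
  rw [List.length_drop] at h1
  omega

lemma le_skipRun (L : List ℕ) (l a : ℕ) : a ≤ skipRun L l a := Nat.le_add_right _ _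

lemma take_skipRun (L : List ℕ) (l a : ℕ) :
    L.take (skipRun L l a) = L.take a ++ (L.drop a).takeWhile (fun x => x = l) := by
  unfold skipRun
  rw [List.take_add]
  congr 1
  exact ((List.prefix_iff_eq_take).1 (List.takeWhile_prefix _)).symm

lemma getD_take {L : List ℕ} {t s : ℕ} (h : s < t) :
    (L.take t).getD s 0 = L.getD s 0 := by
  rw [List.getD_eq_getElem?_getD, List.getD_eq_getElem?_getD, List.getElem?_take,
    if_pos h]

lemma getD_run {L : List ℕ} {l a s : ℕ} (ha : a ≤ L.length) (h1 : a ≤ s)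
    (h2 : s < skipRun L l a) : L.getD s 0 = l := by
  have key : L.getD s 0 = (L.take a ++ (L.drop a).takeWhile (fun x => x = l)).getD s 0 := by
    rw [← take_skipRun L l a, getD_take h2]
  rw [key]
  have hlen : (L.take a).length = a := by
    rw [List.length_take]; omega
  rw [List.getD_append_right _ _ _ _ (by omega)]
  rw [hlen]
  have hsR : s - a < ((L.drop a).takeWhile (fun x => x = l)).length := by
    have : skipRun L l a = a + ((L.drop a).takeWhile (fun x => x = l)).length := rfl
    omega
  rw [List.getD_eq_getElem _ _ hsR]
  have := List.mem_takeWhile_imp (List.getElem_mem hsR)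
  simpa using this

lemma getD_skipRun_ne {L : List ℕ} {l a : ℕ} (ha : a ≤ L.length)
    (hs : skipRun L l a < L.length) : L.getD (skipRun L l a) 0 ≠ l := by
  have hRD : ((L.drop a).takeWhile (fun x => x = l)) ++ ((L.drop a).dropWhile (fun x => x = l))
      = L.drop a := List.takeWhile_append_dropWhile
  have hsr : skipRun L l a = a + ((L.drop a).takeWhile (fun x => x = l)).length := rfl
  have hlens : ((L.drop a).takeWhile (fun x => x = l)).length
      + ((L.drop a).dropWhile (fun x => x = l)).length = L.length - a := by
    have h0 := congrArg List.length hRD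
    rw [List.length_append, List.length_drop] at h0
    omega
  have hDne : (L.drop a).dropWhile (fun x => x = l) ≠ [] := by
    intro hc
    rw [hc] at hlens
    simp at hlens
    omega
  have hD0 : 0 < ((L.drop a).dropWhile (fun x => x = l)).length :=
    List.length_pos_iff.mpr hDne
  have hhead := List.head_dropWhile_not (fun x => x = l) (l := L.drop a) hDne
  rw [List.head_eq_getElem] at hhead
  have h4 : (((L.drop a).takeWhile (fun x => x = l)) ++
      ((L.drop a).dropWhile (fun x => x = l)))[skipRun L l a - a]?
      = ((L.drop a).dropWhile (fun x => x = l))[0]? := by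
    rw [List.getElem?_append_right (by omega)]
    congr 1
    omega
  rw [hRD] at h4
  have key : L[skipRun L l a]? = ((L.drop a).dropWhile (fun x => x = l))[0]? := by
    rw [← h4, List.getElem?_drop]
    congr 1
    omega
  rw [List.getD_eq_getElem?_getD, key, List.getElem?_eq_getElem hD0]
  intro hc
  simp only [Option.getD_some] at hc
  rw [hc] at hhead
  simp at hhead

lemma exists_of_ascent (L : List ℕ) (hA : ∀ t, L.getD (t+1) 0 ≤ L.getD t 0 + 1)
    {c : ℕ} : ∀ (t s : ℕ), s ≤ t → L.getD s 0 < c → c ≤ L.getD t 0 →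
    ∃ u, s < u ∧ u ≤ t ∧ L.getD u 0 = c := by
  intro t
  induction t with
  | zero =>
    intro s hs h1 h2
    interval_cases s
    omega
  | succ t ih =>
    intro s hs h1 h2
    rcases Nat.lt_or_ge (L.getD t 0) c with h3 | h3
    · have h4 := hA t
      have : L.getD (t+1) 0 = c := by omega
      have hst : s ≠ t + 1 := by intro hc; rw [hc] at h1; omega
      exact ⟨t+1, by omega, le_rfl, this⟩
    · have hst : s ≤ t := by
        rcases Nat.lt_or_ge s (t+1) with h' | h'
        · omega
        · exfalso; have : s = t + 1 := by omega
          rw [this] at h1; omega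
      obtain ⟨u, hu1, hu2, hu3⟩ := ih s hst h1 h3
      exact ⟨u, hu1, by omega, hu3⟩



end UIO
namespace UIO

lemma getD_drop (L : List ℕ) (a i : ℕ) :
    (L.drop a).getD i 0 = L.getD (a + i) 0 := by
  rw [List.getD_eq_getElem?_getD, List.getD_eq_getElem?_getD, List.getElem?_drop]

lemma card_filter_val_lt_succ {n : ℕ} (m : ℕ) (hm : m < n) (P : Fin n → Prop)
    [DecidablePred P] :
    (Finset.univ.filter fun x : Fin n => x.val < m + 1 ∧ P x).card
    = (Finset.univ.filter fun x : Fin n => x.val < m ∧ P x).card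
      + (if P ⟨m, hm⟩ then 1 else 0) := by
  have hsplit : (Finset.univ.filter fun x : Fin n => x.val < m + 1 ∧ P x)
      = (Finset.univ.filter fun x : Fin n => x.val < m ∧ P x)
      ∪ (Finset.univ.filter fun x : Fin n => x = ⟨m, hm⟩ ∧ P x) := by
    rw [← Finset.filter_or]
    apply Finset.filter_congr
    intro x _
    constructor
    · rintro ⟨h1, h2⟩
      rcases Nat.lt_or_ge x.val m with h' | h'
      · exact Or.inl ⟨h', h2⟩
      · exact Or.inr ⟨Fin.ext (show x.val = m by omega), h2⟩
    · rintro (⟨h1, h2⟩ | ⟨h1, h2⟩)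
      · exact ⟨by omega, h2⟩
      · refine ⟨?_, h2⟩
        rw [h1]
        simp
  have hdisj : Disjoint (Finset.univ.filter fun x : Fin n => x.val < m ∧ P x)
      (Finset.univ.filter fun x : Fin n => x = ⟨m, hm⟩ ∧ P x) := by
    rw [Finset.disjoint_filter]
    rintro x _ ⟨h1, -⟩ ⟨h2, -⟩
    rw [h2] at h1
    simp at h1
  have hsingle : (Finset.univ.filter fun x : Fin n => x = ⟨m, hm⟩ ∧ P x)
      = if P ⟨m, hm⟩ then {(⟨m, hm⟩ : Fin n)} else ∅ := by
    split
    · next hP =>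
      ext x
      simp only [Finset.mem_filter, Finset.mem_univ, true_and, Finset.mem_singleton]
      constructor
      · rintro ⟨h1, -⟩; exact h1
      · rintro rfl; exact ⟨rfl, hP⟩
    · next hP =>
      ext x
      simp only [Finset.mem_filter, Finset.mem_univ, true_and, Finset.notMem_empty,
        iff_false]
      rintro ⟨rfl, h2⟩
      exact hP h2
  rw [hsplit, Finset.card_union_of_disjoint hdisj, hsingle]
  split <;> simp

theorem buildQ_spec {n : ℕ} (r : Fin n → Fin n → Prop) [DecidableRel r] (h : IsUIO r) :
    ∀ m, m ≤ n →
    (buildQ r m).length = m ∧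
    (∀ v, (buildQ r m).count v
        = (Finset.univ.filter fun x : Fin n => x.val < m ∧ level r x = v).card) ∧
    (∀ t, (buildQ r m).getD (t+1) 0 ≤ (buildQ r m).getD t 0 + 1) ∧
    (∀ t v, t < (buildQ r m).length → (buildQ r m).getD t 0 = v + 1 →
      ∃ y : Fin n, y.val = Nlt r (v+1) + ((buildQ r m).take t).count (v+1) ∧
        ((buildQ r m).take t).count v = comparCount r y) := by
  intro m
  induction m with
  | zero =>
    intro _
    refine ⟨rfl, ?_, ?_, ?_⟩
    · intro v
      have : (buildQ r 0) = ([] : List ℕ) := rfl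
      rw [this]
      have : (Finset.univ.filter fun x : Fin n => x.val < 0 ∧ level r x = v) = ∅ := by
        apply Finset.filter_false_of_mem
        intro x _
        rintro ⟨h1, -⟩
        omega
      simp [this]
    · intro t
      have : (buildQ r 0) = ([] : List ℕ) := rfl
      simp [this]
    · intro t v ht
      have : (buildQ r 0) = ([] : List ℕ) := rfl
      rw [this] at ht
      simp at ht
  | succ m ih =>
    intro hm1
    have hmn : m < n := hm1
    obtain ⟨hlen, hcnt, hasc, hP2⟩ := ih (le_of_lt hmn)
    set q := buildQ r m with hqdef
    set M : Fin n := ⟨m, hmn⟩ with hMdef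
    set l := level r M with hldef
    set C := comparCount r M with hCdef
    set a := afterKth q (l - 1) C with hadef
    set p := skipRun q l a with hpdef
    have hbq : buildQ r (m+1) = q.insertIdx p l := by
      rw [buildQ]
      simp only [hmn, dif_pos]
      rfl
    have hletter_mem : ∀ x ∈ q, x ≤ l := by
      intro x hx
      have hpos : 0 < q.count x := List.count_pos_iff.mpr hx
      rw [hcnt] at hpos
      rw [Finset.card_pos] at hpos
      obtain ⟨y, hy⟩ := hpos
      rcases Finset.mem_filter.mp hy with ⟨-, hy1, hy2⟩
      rw [← hy2]
      have hMval : (M : ℕ) = m := rfl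
      exact level_mono h (show y ≤ M by rw [Fin.le_def]; omega)
    have hletter : ∀ t, q.getD t 0 ≤ l := by
      intro t
      rcases Nat.lt_or_ge t q.length with ht | ht
      · rw [List.getD_eq_getElem _ _ ht]
        exact hletter_mem _ (List.getElem_mem ht)
      · rw [List.getD_eq_default _ _ ht]
        exact Nat.zero_le l
    by_cases hl0 : l = 0
    -- ================= CASE l = 0 =================
    · have hC0 : C = 0 := comparCount_eq_zero h M (by omega)
      have ha0 : a = 0 := by
        rw [hadef, hC0]
        cases q <;> simp [afterKth]
      have hpm : p = q.length := by
        rw [hpdef, ha0]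
        unfold skipRun
        have : (q.drop 0).takeWhile (fun x => x = l) = q.drop 0 := by
          rw [List.takeWhile_eq_self_iff]
          intro x hx
          simp only [List.drop_zero] at hx
          have h1 := hletter_mem x hx
          simp; omega
        rw [this]
        simp
      have hQ : buildQ r (m+1) = q ++ [0] := by
        rw [hbq, hpm, ← hl0, List.insertIdx_length_self]
      refine ⟨?_, ?_, ?_, ?_⟩
      · rw [hQ]; simp [hlen]
      · intro v
        rw [hQ, List.count_append, hcnt v,
          card_filter_val_lt_succ m hmn (fun x => level r x = v)]
        have : level r M = l := hldef.symm
        simp only [List.count_singleton]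
        congr 1
        rw [← hMdef]
        by_cases hv : level r M = v
        · rw [if_pos hv]
          have : (0 == v) = true := by rw [beq_iff_eq]; omega
          rw [this]; simp
        · rw [if_neg hv]
          have : (0 == v) = false := by rw [beq_eq_false_iff_ne]; omega
          rw [this]; simp
      · intro t
        rw [hQ]
        rcases Nat.lt_or_ge (t+1) q.length with ht | ht
        · rw [List.getD_append _ _ _ _ ht, List.getD_append _ _ _ _ (by omega)]
          exact hasc t
        · rcases Nat.lt_or_ge (t+1) (q.length + 1) with ht2 | ht2
          · have : t + 1 = q.length := by omega
            rw [this, List.getD_append_right _ _ _ _ (le_refl _)]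
            simp
          · rw [List.getD_eq_default]
            · omega
            · simp; omega
      · intro t v ht hgt
        rw [hQ] at ht hgt ⊢
        simp only [List.length_append, List.length_singleton] at ht
        rcases Nat.lt_or_ge t q.length with ht' | ht'
        · rw [List.getD_append _ _ _ _ ht'] at hgt
          rw [List.take_append_of_le_length (by omega)]
          exact hP2 t v ht' hgt
        · have : t = q.length := by omega
          rw [this, List.getD_append_right _ _ _ _ (le_refl _)] at hgt
          simp at hgt
    -- ================= CASE l = l₀ + 1 =================
    · obtain ⟨l₀, hl⟩ : ∃ l₀, l = l₀ + 1 := ⟨l - 1, by omega⟩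
      have hsub : l - 1 = l₀ := by omega
      have hal : a = afterKth q l₀ C := by rw [hadef, hsub]
      have hlvlM : level r M = l₀ + 1 := by rw [← hldef, hl]
      have hC1 : 1 ≤ C := comparCount_pos h hlvlM
      have hCle : C ≤ q.count l₀ := by
        rw [hcnt l₀]
        have := comparCount_le h hlvlM
        simpa [hMdef] using this
      have ha_len : a ≤ q.length := by rw [hal]; exact afterKth_le_length q l₀ C
      have ha_cnt : (q.take a).count l₀ = C := by
        rw [hal]; exact count_take_afterKth q l₀ C hCle
      obtain ⟨a₀, ha₀1, ha₀2⟩ := afterKth_getD q l₀ C hC1 hCle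
      rw [← hal] at ha₀1
      have hp_len : p ≤ q.length := skipRun_le_length ha_len
      have hap : a ≤ p := le_skipRun q l a
      have h_run : ∀ s, a ≤ s → s < p → q.getD s 0 = l := by
        intro s h1 h2
        exact getD_run ha_len h1 h2
      have hp_ne : p < q.length → q.getD p 0 ≠ l := fun hp' =>
        getD_skipRun_ne ha_len hp'
      have h_cnt_l0_p : (q.take p).count l₀ = C := by
        rw [hpdef, take_skipRun, List.count_append, ha_cnt]
        have : ((q.drop a).takeWhile (fun x => x = l)).count l₀ = 0 := by
          rw [List.count_eq_zero]
          intro hmem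
          have := List.mem_takeWhile_imp hmem
          simp at this
          omega
        omega
      have hm_eq : Nlt r l
          + (Finset.univ.filter fun x : Fin n => x.val < m ∧ level r x = l).card
          = m := by
        have := Nlt_add_card_eq h M
        rw [← hldef] at this
        simpa [hMdef] using this
      -- key claim: every occurrence of letter l is before p
      have h_no_l : ∀ t, t < q.length → q.getD t 0 = l → t < p := by
        intro t ht hgt
        obtain ⟨y, hy1, hy2⟩ := hP2 t l₀ ht (by rw [hgt, hl])
        rw [← hl] at hy1
        have hcnt_l_t : (q.take t).count l < q.count l := by
          have h1 : (q.take t).count l < (q.take (t+1)).count l := by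
            have := count_take_succ_getD q l t ht
            rw [if_pos hgt] at this
            omega
          have h2 := count_le_count_take q l (t+1)
          omega
        have hyval_lt : y.val < m := by
          rw [hy1]
          rw [hcnt l] at hcnt_l_t
          omega
        have hNle : Nlt r l ≤ y.val := by rw [hy1]; omega
        have hylvl : level r y = l := by
          rw [level_eq_iff h y l]
          refine ⟨hNle, ?_⟩
          have h3 : (Finset.univ.filter fun x : Fin n => x.val < m ∧ level r x = l).card
              ≤ (Finset.univ.filter fun x : Fin n => level r x = l).card := by
            apply Finset.card_le_card
            intro z hz
            rcases Finset.mem_filter.mp hz with ⟨-, -, hz2⟩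
            simp only [Finset.mem_filter, Finset.mem_univ, true_and]
            exact hz2
          have h4 := Nlt_succ (r := r) l
          rw [hcnt l] at hcnt_l_t
          omega
        have hyM : y ≤ M := by
          rw [Fin.le_def]
          simp only [hMdef]
          omega
        have hyC : comparCount r y ≤ C := by
          rw [hCdef]
          exact comparCount_mono h (by rw [hylvl, ← hldef]) hyM

        have hcle : (q.take t).count l₀ ≤ C := by rw [hy2]; exact hyC
        rcases Nat.lt_or_ge ((q.take t).count l₀) C with hlt | hge
        · have h5 : (q.take t).count l₀ < (q.take a).count l₀ := by
            rw [ha_cnt]; exact hlt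
          have := lt_of_count_take_lt h5
          omega
        · have heqC : (q.take t).count l₀ = C := by omega
          by_contra hpt
          push_neg at hpt
          have hplen : p < q.length := lt_of_le_of_lt hpt ht
          have hne := hp_ne hplen
          have hpt' : p < t := by
            rcases Nat.lt_or_ge p t with h' | h'
            · exact h'
            · exfalso
              have : p = t := by omega
              rw [this] at hne
              exact hne hgt
          have hv'le : q.getD p 0 ≤ l := hletter p
          rcases Nat.lt_or_ge (q.getD p 0) l₀ with hv' | hv'
          · obtain ⟨u, hu1, hu2, hu3⟩ := exists_of_ascent q hasc t p (le_of_lt hpt') hv'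
              (by rw [hgt]; omega)
            have hut : u < t := by
              rcases Nat.lt_or_ge u t with h' | h'
              · exact h'
              · exfalso
                have : u = t := by omega
                rw [this, hgt] at hu3
                omega
            have hau : a ≤ u := by omega
            have h5 : C ≤ (q.take u).count l₀ := by
              rw [← ha_cnt]; exact count_take_mono q l₀ hau
            have h6 : (q.take u).count l₀ < (q.take t).count l₀ :=
              count_take_lt q hut (by omega) hu3
            omega
          · have hv'' : q.getD p 0 = l₀ := by omega
            have h7 : (q.take (p+1)).count l₀ = C + 1 := by
              have := count_take_succ_getD q l₀ p hplen
              rw [if_pos hv''] at this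
              omega
            have h8 : (q.take (p+1)).count l₀ ≤ (q.take t).count l₀ :=
              count_take_mono q l₀ (by omega)
            omega
      have h_cnt_l_p : (q.take p).count l = q.count l := by
        have hsplit : q.count l = (q.take p).count l + (q.drop p).count l := by
          conv_lhs => rw [← List.take_append_drop p q]
          rw [List.count_append]
        have hdrop : (q.drop p).count l = 0 := by
          rw [List.count_eq_zero]
          intro hmem
          obtain ⟨i, hi, hgi⟩ := List.getElem_of_mem hmem
          have hlen_i : p + i < q.length := by
            rw [List.length_drop] at hi; omega
          have hgd : q.getD (p+i) 0 = l := by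
            rw [← getD_drop q p i,
              List.getD_eq_getElem _ _ (by rw [List.length_drop]; omega)]
            exact hgi
          have := h_no_l (p+i) hlen_i hgd
          omega
        omega
      set Q := q.take p ++ l :: q.drop p with hQdef
      have hbq' : buildQ r (m+1) = Q := by rw [hbq, insertIdx_eq p q l hp_len]
      have hlen_take : (q.take p).length = p := by
        rw [List.length_take]; omega
      have hlenQ : Q.length = m + 1 := by
        rw [hQdef, List.length_append, List.length_cons, List.length_drop, hlen_take]
        omega
      have getD_Q : ∀ s, Q.getD s 0 =
          if s < p then q.getD s 0 else if s = p then l else q.getD (s-1) 0 := by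
        intro s
        rcases lt_trichotomy s p with hs | hs | hs
        · rw [if_pos hs, hQdef, List.getD_append _ _ _ _ (by rw [hlen_take]; omega),
            getD_take hs]
        · rw [if_neg (by omega), if_pos hs, hQdef,
            List.getD_append_right _ _ _ _ (by rw [hlen_take]; omega), hlen_take, hs]
          simp
        · rw [if_neg (by omega), if_neg (by omega), hQdef,
            List.getD_append_right _ _ _ _ (by rw [hlen_take]; omega), hlen_take]
          rw [show s - p = (s - p - 1) + 1 by omega, List.getD_cons_succ, getD_drop]
          congr 1
          omega
      have take_Q_le : ∀ s, s ≤ p → Q.take s = q.take s := by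
        intro s hs
        rw [hQdef, List.take_append_of_le_length (by rw [hlen_take]; omega),
          List.take_take, min_eq_left hs]
      have count_take_Q_gt : ∀ s c, p < s →
          (Q.take s).count c = (q.take (s-1)).count c + if l = c then 1 else 0 := by
        intro s c hs
        have h1 : Q.take s = q.take p ++ l :: (q.drop p).take (s - p - 1) := by
          rw [hQdef, List.take_append, hlen_take,
            List.take_of_length_le (by rw [hlen_take]; omega),
            show s - p = (s - p - 1) + 1 by omega, List.take_succ_cons]
          simp only [Nat.add_sub_cancel]
        have h2 : q.take (s-1) = q.take p ++ (q.drop p).take (s-1-p) := by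
          conv_lhs => rw [show s - 1 = p + (s-1-p) by omega]
          rw [List.take_add]
        rw [h1, h2, List.count_append, List.count_append, List.count_cons]
        rw [show s - p - 1 = s - 1 - p by omega]
        by_cases hc : l = c
        · rw [if_pos hc, beq_iff_eq.mpr hc]
          simp
          omega
        · rw [if_neg hc, beq_eq_false_iff_ne.mpr hc]
          simp
      refine ⟨?_, ?_, ?_, ?_⟩
      · rw [hbq']; exact hlenQ
      · intro v
        rw [hbq']
        have hqc : Q.count v = q.count v + if l = v then 1 else 0 := by
          have hq0 : q.count v = (q.take p).count v + (q.drop p).count v := by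
            conv_lhs => rw [← List.take_append_drop p q]
            rw [List.count_append]
          rw [hQdef, List.count_append, List.count_cons, hq0]
          by_cases hc : l = v
          · rw [if_pos hc, if_pos (beq_iff_eq.mpr hc)]
            omega
          · rw [if_neg hc, if_neg (show ¬ ((l == v) = true) by simp [hc])]
            omega
        rw [hqc, hcnt v, card_filter_val_lt_succ m hmn (fun x => level r x = v)]
      · intro t
        rw [hbq', getD_Q t, getD_Q (t+1)]
        by_cases h1 : t + 1 < p
        · rw [if_pos h1, if_pos (show t < p by omega)]
          exact hasc t
        · by_cases h2 : t + 1 = p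
          · rw [if_neg h1, if_pos h2, if_pos (show t < p by omega)]
            rcases Nat.lt_or_ge t a with hta | hta
            · have ht_a₀ : t = a₀ := by omega
              rw [ht_a₀, ha₀2]
              omega
            · rw [h_run t hta (by omega)]
              omega
          · have h3 : p < t + 1 := by omega
            rw [if_neg h1, if_neg h2]
            by_cases h4 : t = p
            · rw [if_neg (show ¬ t < p by omega), if_pos h4,
                show t + 1 - 1 = t by omega]
              have := hletter t
              omega
            · rw [if_neg (show ¬ t < p by omega), if_neg h4,
                show t + 1 - 1 = t by omega]
              have h5 := hasc (t-1)
              rw [show t - 1 + 1 = t by omega] at h5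
              exact h5
      · intro t v ht hgt
        rw [hbq'] at ht hgt ⊢
        rw [hlenQ] at ht
        rw [getD_Q t] at hgt
        by_cases h1 : t < p
        · rw [if_pos h1] at hgt
          rw [take_Q_le t (by omega)]
          exact hP2 t v (by omega) hgt
        · by_cases h2 : t = p
          · rw [if_neg h1, if_pos h2] at hgt
            have hv : v = l₀ := by omega
            subst hv
            refine ⟨M, ?_, ?_⟩
            · rw [take_Q_le t (by omega), h2, ← hl, h_cnt_l_p, hcnt l]
              have hMval : M.val = m := rfl
              omega
            · rw [take_Q_le t (by omega), h2, h_cnt_l0_p, hCdef]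
          · have h3 : p < t := by omega
            rw [if_neg h1, if_neg h2] at hgt
            have ht1 : t - 1 < q.length := by omega
            have hv1 : v + 1 ≠ l := by
              intro hc
              have := h_no_l (t-1) ht1 (by rw [hgt, hc])
              omega
            have hv2 : v ≠ l := by
              intro hc
              have := hletter (t-1)
              rw [hgt] at this
              omega
            obtain ⟨y, hy1, hy2⟩ := hP2 (t-1) v ht1 hgt
            refine ⟨y, ?_, ?_⟩
            · rw [count_take_Q_gt t (v+1) h3, if_neg (fun hc => hv1 hc.symm)]
              omega
            · rw [count_take_Q_gt t v h3, if_neg (fun hc => hv2 hc.symm)]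
              simpa using hy2

end UIO


namespace UIO

lemma card_filter_lt_val_succ_split {n : ℕ} (g : Fin n → ℕ) (c : ℕ) :
    (Finset.univ.filter fun i : Fin n => g i < c + 1).card
    = (Finset.univ.filter fun i : Fin n => g i < c).card
      + (Finset.univ.filter fun i : Fin n => g i = c).card := by
  have hsplit : (Finset.univ.filter fun i : Fin n => g i < c + 1)
      = (Finset.univ.filter fun i : Fin n => g i < c)
      ∪ (Finset.univ.filter fun i : Fin n => g i = c) := by
    rw [← Finset.filter_or]
    apply Finset.filter_congr
    intro x _
    constructor <;> intro hx <;> omega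
  have hdisj : Disjoint (Finset.univ.filter fun i : Fin n => g i < c)
      (Finset.univ.filter fun i : Fin n => g i = c) := by
    rw [Finset.disjoint_filter]
    intro x _ hx
    omega
  rw [hsplit, Finset.card_union_of_disjoint hdisj]

lemma count_take_eq_card {n : ℕ} (L : List ℕ) (hL : L.length = n) :
    ∀ (t : ℕ), t ≤ n → ∀ c, (L.take t).count c
      = (Finset.univ.filter fun i : Fin n => i.val < t ∧ L.getD i.val 0 = c).card := by
  intro t
  induction t with
  | zero =>
    intro _ c
    have : (Finset.univ.filter fun i : Fin n => i.val < 0 ∧ L.getD i.val 0 = c) = ∅ := by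
      apply Finset.filter_false_of_mem
      intro x _
      rintro ⟨h1, -⟩
      omega
    simp [this]
  | succ t ih =>
    intro ht c
    rw [count_take_succ_getD L c t (by omega), ih (by omega) c,
      card_filter_val_lt_succ t (show t < n by omega) (fun i : Fin n => L.getD i.val 0 = c)]

lemma equiv_val_eq_card {n : ℕ} (e : Fin n ≃ Fin n) (p : Fin n) :
    (e p).val = (Finset.univ.filter fun q : Fin n => e q < e p).card := by
  have h1 : (Finset.univ.filter fun q : Fin n => e q < e p)
      = (Finset.univ.filter fun q : Fin n => q < e p).map e.symm.toEmbedding := by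
    ext x
    simp [Finset.mem_map_equiv]
  rw [h1, Finset.card_map]
  have h2 : (Finset.univ.filter fun q : Fin n => q < e p) = Finset.Iio (e p) := by
    ext x
    simp
  rw [h2, Fin.card_Iio]

end UIO

/-- For a unit interval order `U` with part listing `w = q(U)`,
the poset `P(w)` is isomorphic to `U` via the bijection `f` numbering the
positions of `w` by increasing letter value and, within equal letter values,
from left to right. -/
theorem prel_qList_iso {n : ℕ} (r : Fin n → Fin n → Prop) [DecidableRel r]
    (h : IsUIO r) (f : Fin n ≃ Fin n)
    (hf : ∀ p q : Fin n, f p < f q ↔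
      ((qList r).getD p 0 < (qList r).getD q 0 ∨
        ((qList r).getD p 0 = (qList r).getD q 0 ∧ p < q))) :
    ∀ p q : Fin n,
      Prel (fun i : Fin n => (qList r).getD i 0) p q ↔ r (f p) (f q) := by
  classical
  obtain ⟨hlen, hcnt, hasc, hP2⟩ := UIO.buildQ_spec r h n le_rfl
  set W : List ℕ := buildQ r n with hWdef
  have hWq : qList r = W := rfl
  set w : Fin n → ℕ := fun i => W.getD i.val 0 with hwdef
  have hWlen : W.length = n := hlen
  -- counts over the whole word
  have hcnt' : ∀ v, W.count v
      = (Finset.univ.filter fun x : Fin n => level r x = v).card := by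
    intro v
    rw [hcnt v]
    congr 1
    apply Finset.filter_congr
    intro x _
    constructor
    · rintro ⟨-, h2⟩; exact h2
    · intro h2; exact ⟨x.isLt, h2⟩
  have hbridge : ∀ (t : ℕ), t ≤ n → ∀ c, (W.take t).count c
      = (Finset.univ.filter fun i : Fin n => i.val < t ∧ w i = c).card :=
    UIO.count_take_eq_card W hWlen
  have htotal : ∀ c, W.count c
      = (Finset.univ.filter fun i : Fin n => w i = c).card := by
    intro c
    have h1 : W.count c = (W.take n).count c := by
      rw [List.take_of_length_le (by omega)]
    rw [h1, hbridge n le_rfl c]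
    congr 1
    apply Finset.filter_congr
    intro x _
    constructor
    · rintro ⟨-, h2⟩; exact h2
    · intro h2; exact ⟨x.isLt, h2⟩
  have hNpos : ∀ c, (Finset.univ.filter fun i : Fin n => w i < c).card = Nlt r c := by
    intro c
    induction c with
    | zero =>
      have h1 : (Finset.univ.filter fun i : Fin n => w i < 0) = ∅ := by
        apply Finset.filter_false_of_mem
        intro x _
        omega
      have h2 : (Finset.univ.filter fun x : Fin n => level r x < 0) = ∅ := by
        apply Finset.filter_false_of_mem
        intro x _
        omega
      rw [h1]
      unfold Nlt
      rw [h2]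
    | succ c ih =>
      rw [UIO.card_filter_lt_val_succ_split w c, ih, ← htotal c, hcnt' c,
        UIO.Nlt_succ c]
  -- the candidate bijection
  have hk_lt : ∀ u : Fin n, (W.take u.val).count (w u) < W.count (w u) := by
    intro u
    have h1 := UIO.count_take_succ_getD W (w u) u.val (by omega)
    rw [if_pos rfl] at h1
    have h2 := UIO.count_le_count_take W (w u) (u.val + 1)
    omega
  have hbound : ∀ u : Fin n, Nlt r (w u) + (W.take u.val).count (w u) < n := by
    intro u
    have h1 := hk_lt u
    have h2 := UIO.Nlt_succ (r := r) (w u)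
    have h3 := UIO.Nlt_le (r := r) (n := n) (w u + 1)
    have h4 := hcnt' (w u)
    omega
  set g : Fin n → Fin n := fun u => ⟨Nlt r (w u) + (W.take u.val).count (w u), hbound u⟩
    with hgdef
  have hgval : ∀ u : Fin n, (g u).val = Nlt r (w u) + (W.take u.val).count (w u) := by
    intro u; rfl
  have hglt : ∀ u v : Fin n, (w u < w v ∨ (w u = w v ∧ u < v)) → g u < g v := by
    intro u v huv
    rw [Fin.lt_def, hgval, hgval]
    rcases huv with h1 | ⟨h1, h2⟩
    · have h3 := hk_lt u
      have h4 := UIO.Nlt_succ (r := r) (w u)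
      have h5 := UIO.Nlt_mono (r := r) (n := n) (show w u + 1 ≤ w v by omega)
      have h6 := hcnt' (w u)
      omega
    · have h3 := UIO.count_take_succ_getD W (w u) u.val (by omega)
      rw [if_pos rfl] at h3
      have h4 : (W.take (u.val + 1)).count (w u) ≤ (W.take v.val).count (w u) :=
        UIO.count_take_mono W (w u) (by rw [Fin.lt_def] at h2; omega)
      rw [h1]
      have h5 : (W.take u.val).count (w u) = (W.take u.val).count (w v) := by rw [h1]
      have h6 : (W.take v.val).count (w u) = (W.take v.val).count (w v) := by rw [h1]
      omega
  have hg_lex : ∀ u v : Fin n, g u < g v ↔ (w u < w v ∨ (w u = w v ∧ u < v)) := by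
    intro u v
    rcases lt_trichotomy (w u) (w v) with h1 | h1 | h1
    · exact iff_of_true (hglt u v (Or.inl h1)) (Or.inl h1)
    · rcases lt_trichotomy u v with h2 | h2 | h2
      · exact iff_of_true (hglt u v (Or.inr ⟨h1, h2⟩)) (Or.inr ⟨h1, h2⟩)
      · subst h2
        constructor
        · intro hc; exact absurd hc (lt_irrefl _)
        · rintro (hc | ⟨-, hc⟩)
          · omega
          · exact absurd hc (lt_irrefl _)
      · constructor
        · intro hc
          exact absurd (hglt v u (Or.inr ⟨h1.symm, h2⟩)) (asymm hc)
        · rintro (hc | ⟨-, hc⟩)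
          · omega
          · exact absurd h2 (asymm hc)
    · constructor
      · intro hc
        exact absurd (hglt v u (Or.inl h1)) (asymm hc)
      · rintro (hc | ⟨hc, -⟩)
        · omega
        · omega
  have hginj : Function.Injective g := by
    intro u v huv
    by_contra hne
    rcases lt_trichotomy (w u) (w v) with h1 | h1 | h1
    · exact absurd huv (ne_of_lt (hglt u v (Or.inl h1)))
    · rcases lt_trichotomy u v with h2 | h2 | h2
      · exact absurd huv (ne_of_lt (hglt u v (Or.inr ⟨h1, h2⟩)))
      · exact hne h2
      · exact absurd huv.symm (ne_of_lt (hglt v u (Or.inr ⟨h1.symm, h2⟩)))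
    · exact absurd huv.symm (ne_of_lt (hglt v u (Or.inl h1)))
  have hgbij : Function.Bijective g :=
    (Fintype.bijective_iff_injective_and_card g).mpr ⟨hginj, rfl⟩
  set gE : Fin n ≃ Fin n := Equiv.ofBijective g hgbij with hgEdef
  have hgE : ∀ u : Fin n, gE u = g u := fun u => rfl
  have hfg : ∀ u : Fin n, f u = g u := by
    intro u
    apply Fin.ext
    rw [UIO.equiv_val_eq_card f u]
    have h1 : (Finset.univ.filter fun v : Fin n => f v < f u)
        = (Finset.univ.filter fun v : Fin n => gE v < gE u) := by
      apply Finset.filter_congr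
      intro v _
      rw [hgE, hgE]
      rw [hf v u, hg_lex v u, hWq]
    rw [h1, ← UIO.equiv_val_eq_card gE u, hgE]
  have hflvl : ∀ u : Fin n, level r (f u) = w u := by
    intro u
    rw [UIO.level_eq_iff h (f u) (w u)]
    rw [hfg u, hgval u]
    have h1 := hk_lt u
    have h2 := UIO.Nlt_succ (r := r) (w u)
    have h3 := hcnt' (w u)
    constructor
    · omega
    · omega
  have hkey : ∀ (u : Fin n) (c : ℕ), w u = c + 1 →
      comparCount r (f u) = (W.take u.val).count c := by
    intro u c hu
    obtain ⟨y, hy1, hy2⟩ := hP2 u.val c (by omega)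
      (show W.getD u.val 0 = c + 1 from hu)
    have hyfu : y = f u := by
      apply Fin.ext
      rw [hy1, hfg u, hgval u, hu]
    rw [← hyfu, ← hy2]
  intro p q
  show (w p + 2 ≤ w q ∨ (w q = w p + 1 ∧ p < q)) ↔ r (f p) (f q)
  constructor
  · rintro (h1 | ⟨h1, h2⟩)
    · apply UIO.rel_of_level_ge h
      rw [hflvl p, hflvl q]
      omega
    · have hcc := hkey q (w p) h1
      have h3 := UIO.count_take_lt W (show p.val < q.val from h2) (by omega)
        (show W.getD p.val 0 = w p from rfl)
      apply (UIO.rel_iff_lt_add h (hflvl p) (by rw [hflvl q, h1])).mpr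
      have h4 : (f p).val = Nlt r (w p) + (W.take p.val).count (w p) := by
        rw [hfg p, hgval p]
      omega
  · intro hr
    have hlq := UIO.level_lt_of_rel h hr
    rw [hflvl p, hflvl q] at hlq
    rcases Nat.lt_or_ge (w q) (w p + 2) with h2 | h2
    · have h1 : w q = w p + 1 := by omega
      right
      refine ⟨h1, ?_⟩
      have hcc := hkey q (w p) h1
      have h3 := (UIO.rel_iff_lt_add h (hflvl p) (by rw [hflvl q, h1])).mp hr
      have h4 : (f p).val = Nlt r (w p) + (W.take p.val).count (w p) := by
        rw [hfg p, hgval p]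
      have h5 : (W.take p.val).count (w p) < (W.take q.val).count (w p) := by
        omega
      rw [Fin.lt_def]
      exact UIO.lt_of_count_take_lt h5
    · exact Or.inl h2
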